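/- Soundness and completeness of iGL: ⊢_iGL φ if and only if φ is valid on every intuitionistic Kripke frame that is transitive, converse well-founded, and brilliant. -/

import Mathlib

/-- Modal formulas: propositional variables (indexed by ℕ), ⊥, →, ∧, ∨, □. -/
inductive Formula : Type
  | var : ℕ → Formula
  | bot : Formula
  | imp : Formula → Formula → Formula
  | and : Formula → Formula → Formula
  | or : Formula → Formula → Formula
  | box : Formula → Formula
  deriving DecidableEq
/-- Intuitionistic propositional tautologies in the modal language, given by a standard
Hilbert-style axiomatization (all axiom schemes instantiated with arbitrary modal formulas)
closed under modus ponens. -/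
inductive IPC : Formula → Prop
  | a1 (φ ψ : Formula) : IPC (φ.imp (ψ.imp φ))
  | a2 (φ ψ χ : Formula) : IPC ((φ.imp (ψ.imp χ)).imp ((φ.imp ψ).imp (φ.imp χ)))
  | andI (φ ψ : Formula) : IPC (φ.imp (ψ.imp (φ.and ψ)))
  | andE1 (φ ψ : Formula) : IPC ((φ.and ψ).imp φ)
  | andE2 (φ ψ : Formula) : IPC ((φ.and ψ).imp ψ)
  | orI1 (φ ψ : Formula) : IPC (φ.imp (φ.or ψ))
  | orI2 (φ ψ : Formula) : IPC (ψ.imp (φ.or ψ))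
  | orE (φ ψ χ : Formula) : IPC ((φ.imp χ).imp ((ψ.imp χ).imp ((φ.or ψ).imp χ)))
  | efq (φ : Formula) : IPC (Formula.bot.imp φ)
  | mp {φ ψ : Formula} : IPC (φ.imp ψ) → IPC φ → IPC ψ

/-- The Hilbert system for `iGL`: the smallest intuitionistic normal modal logic containing
all instances of the Löb axiom, i.e. all intuitionistic propositional tautologies, the K axiom
scheme and the Löb axiom scheme, closed under modus ponens and necessitation. -/
inductive iGLH : Formula → Prop
  | taut {φ : Formula} : IPC φ → iGLH φ
  | k (φ ψ : Formula) : iGLH (((φ.imp ψ).box).imp ((φ.box).imp (ψ.box)))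
  | lob (φ : Formula) : iGLH ((((φ.box).imp φ).box).imp (φ.box))
  | mp {φ ψ : Formula} : iGLH (φ.imp ψ) → iGLH φ → iGLH ψ
  | nec {φ : Formula} : iGLH φ → iGLH (φ.box)

/-- `⊤` as the formula `⊥ → ⊥`. -/
def Formula.top : Formula := Formula.bot.imp Formula.bot

/-- The conjunction `⋀Γ` of a list of formulas. -/
def conj (l : List Formula) : Formula := l.foldr Formula.and Formula.top
/-- An intuitionistic Kripke frame: a nonempty set with a partial order `≤`, a relation `R`,
such that `≤;R ⊆ R`. -/
structure IKFrame where
  W : Type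
  nonempty : Nonempty W
  le : W → W → Prop
  R : W → W → Prop
  po : IsPartialOrder W le
  le_comp_R : ∀ {x y z : W}, le x y → R y z → R x z

/-- A valuation is monotone when it is upward closed along `≤`. -/
def MonotoneVal (F : IKFrame) (V : ℕ → F.W → Prop) : Prop :=
  ∀ p w v, F.le w v → V p w → V p v

/-- The satisfaction relation on an intuitionistic Kripke model. -/
def Sat (F : IKFrame) (V : ℕ → F.W → Prop) : F.W → Formula → Prop
  | w, .var p => V p w
  | _, .bot => False
  | w, .and φ ψ => Sat F V w φ ∧ Sat F V w ψ
  | w, .or φ ψ => Sat F V w φ ∨ Sat F V w ψ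
  | w, .imp φ ψ => ∀ v, F.le w v → Sat F V v φ → Sat F V v ψ
  | w, .box φ => ∀ v, F.R w v → Sat F V v φ

/-- `φ` is valid on the frame `F`: satisfied at every world under every monotone valuation. -/
def ValidOn (F : IKFrame) (φ : Formula) : Prop :=
  ∀ V : ℕ → F.W → Prop, MonotoneVal F V → ∀ w : F.W, Sat F V w φ

/-- A transitive frame: `R;R ⊆ R`. -/
def IKFrame.Transitive (F : IKFrame) : Prop :=
  ∀ {x y z : F.W}, F.R x y → F.R y z → F.R x z

/-- A brilliant frame: `R;≤ ⊆ R`. -/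
def IKFrame.Brilliant (F : IKFrame) : Prop :=
  ∀ {x y z : F.W}, F.R x y → F.le y z → F.R x z

/-- A converse well-founded frame: `R` has no infinite ascending chain. -/
def IKFrame.ConverseWellFounded (F : IKFrame) : Prop :=
  ¬ ∃ f : ℕ → F.W, ∀ n : ℕ, F.R (f n) (f (n + 1))

/- ### Derivations from hypotheses -/

inductive Deriv (Γ : Set Formula) : Formula → Prop
  | ax {ψ} : ψ ∈ Γ → Deriv Γ ψ
  | thm {ψ} : iGLH ψ → Deriv Γ ψ
  | mp {ψ χ} : Deriv Γ (ψ.imp χ) → Deriv Γ ψ → Deriv Γ χ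

theorem Deriv.weaken {Γ Γ' : Set Formula} (h : Γ ⊆ Γ') {ψ} (d : Deriv Γ ψ) : Deriv Γ' ψ := by
  induction d with
  | ax h' => exact .ax (h h')
  | thm h' => exact .thm h'
  | mp _ _ ih1 ih2 => exact .mp ih1 ih2

theorem iGLH_id (φ : Formula) : iGLH (φ.imp φ) :=
  .taut (IPC.mp (IPC.mp (IPC.a2 φ (φ.imp φ) φ) (IPC.a1 φ (φ.imp φ))) (IPC.a1 φ φ))

theorem Deriv.deduction {Γ : Set Formula} {A B : Formula} (d : Deriv (insert A Γ) B) :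
    Deriv Γ (A.imp B) := by
  induction d with
  | @ax ψ h =>
    rcases Set.mem_insert_iff.1 h with h | h
    · subst h; exact .thm (iGLH_id _)
    · exact .mp (.thm (.taut (IPC.a1 ψ A))) (.ax h)
  | @thm ψ h => exact .mp (.thm (.taut (IPC.a1 ψ A))) (.thm h)
  | @mp ψ χ _ _ ih1 ih2 => exact .mp (.mp (.thm (.taut (IPC.a2 A ψ χ))) ih1) ih2

theorem Deriv.toIGLH {ψ : Formula} (d : Deriv ∅ ψ) : iGLH ψ := by
  induction d with
  | ax h => exact absurd h (Set.notMem_empty _)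
  | thm h => exact h
  | mp _ _ ih1 ih2 => exact ih1.mp ih2

/- ### Propositional toolkit -/

theorem iGLH.imp_trans {a b c : Formula} (h1 : iGLH (a.imp b)) (h2 : iGLH (b.imp c)) :
    iGLH (a.imp c) :=
  Deriv.toIGLH <| Deriv.deduction <|
    .mp (.thm h2) (.mp (.thm h1) (.ax (Set.mem_insert _ _)))

theorem iGLH.top : iGLH Formula.top := iGLH_id _

theorem iGLH.andIntro {a b : Formula} (h1 : iGLH a) (h2 : iGLH b) : iGLH (a.and b) :=
  (iGLH.mp (.taut (IPC.andI a b)) h1).mp h2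

/-- From `⊢ (x ∧ y) → z` infer `⊢ y → (x → z)`. -/
theorem iGLH.curry {x y z : Formula} (h : iGLH ((x.and y).imp z)) :
    iGLH (y.imp (x.imp z)) := by
  refine Deriv.toIGLH <| Deriv.deduction <| Deriv.deduction ?_
  refine .mp (.thm h) (.mp (.mp (.thm (.taut (IPC.andI x y))) (.ax ?_)) (.ax ?_))
  · exact Set.mem_insert _ _
  · exact Set.mem_insert_of_mem _ (Set.mem_insert _ _)

theorem iGLH.box_mono {a b : Formula} (h : iGLH (a.imp b)) : iGLH (a.box.imp b.box) :=
  iGLH.mp (iGLH.k a b) (iGLH.nec h)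

theorem iGLH.box_distrib2 {a b c : Formula} (h : iGLH (a.imp (b.imp c))) :
    iGLH (a.box.imp (b.box.imp c.box)) :=
  (iGLH.box_mono h).imp_trans (iGLH.k b c)

/-- `⊢ □a → □b → □(a ∧ b)`. -/
theorem iGLH.boxAnd (a b : Formula) : iGLH (a.box.imp (b.box.imp ((a.and b).box))) :=
  iGLH.box_distrib2 (.taut (IPC.andI a b))

/-- The 4 axiom is derivable in iGL. -/
theorem iGLH.four (χ : Formula) : iGLH (χ.box.imp χ.box.box) := by
  set ψ := χ.and χ.box with hψ
  have h2 : iGLH (ψ.imp χ.box) := .taut (IPC.andE2 χ χ.box)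
  have hA : iGLH (χ.imp (ψ.box.imp ψ)) := by
    refine Deriv.toIGLH <| Deriv.deduction <| Deriv.deduction ?_
    refine .mp (.mp (.thm (.taut (IPC.andI χ χ.box))) (.ax ?_)) ?_
    · exact Set.mem_insert_of_mem _ (Set.mem_insert _ _)
    · exact .mp (.thm (iGLH.box_mono (.taut (IPC.andE1 χ χ.box)))) (.ax (Set.mem_insert _ _))
  have hB : iGLH (χ.box.imp ψ.box) :=
    (iGLH.box_mono hA).imp_trans (iGLH.lob ψ)
  exact hB.imp_trans (iGLH.box_mono h2)

/- ### Conjunction lemmas -/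

theorem iGLH.conj_mem {l : List Formula} {x : Formula} (h : x ∈ l) :
    iGLH ((conj l).imp x) := by
  induction l with
  | nil => cases h
  | cons a l ih =>
    rcases List.mem_cons.1 h with h | h
    · subst h; exact .taut (IPC.andE1 _ _)
    · exact (iGLH.imp_trans (.taut (IPC.andE2 a (conj l))) (ih h))

theorem Deriv.conj_of {Γ : Set Formula} {l : List Formula}
    (h : ∀ x ∈ l, Deriv Γ x) : Deriv Γ (conj l) := by
  induction l with
  | nil => exact .thm iGLH.top
  | cons a l ih =>
    exact .mp (.mp (.thm (.taut (IPC.andI a (conj l)))) (h a List.mem_cons_self))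
      (ih fun x hx => h x (List.mem_cons_of_mem _ hx))

theorem Deriv.conj_imp {l : List Formula} {ψ : Formula} (d : Deriv {x | x ∈ l} ψ) :
    iGLH ((conj l).imp ψ) := by
  induction d with
  | ax h => exact iGLH.conj_mem h
  | thm h => exact iGLH.mp (.taut (IPC.a1 _ _)) h
  | @mp a b _ _ ih1 ih2 => exact iGLH.mp (iGLH.mp (.taut (IPC.a2 (conj l) a b)) ih1) ih2

/-- Collecting boxed hypotheses: `⊢ ⋀(□L) → □(⋀ (χ ∧ □χ for χ ∈ L))`. -/
theorem iGLH.collectBoxes (L : List Formula) :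
    iGLH ((conj (L.map Formula.box)).imp
      ((conj (L.flatMap fun χ => [χ, χ.box])).box)) := by
  induction L with
  | nil =>
    exact iGLH.mp (.taut (IPC.a1 _ _)) (iGLH.nec iGLH.top)
  | cons χ L ih =>
    refine Deriv.toIGLH <| Deriv.deduction ?_
    have hb : Deriv {conj ((χ :: L).map Formula.box)} (χ.box) :=
      .mp (.thm (.taut (IPC.andE1 _ _))) (.ax rfl)
    have hr : Deriv {conj ((χ :: L).map Formula.box)} ((conj (L.flatMap fun χ => [χ, χ.box])).box) :=
      .mp (.thm ih) (.mp (.thm (.taut (IPC.andE2 _ _))) (.ax rfl))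
    have hbb : Deriv {conj ((χ :: L).map Formula.box)} (χ.box.box) :=
      .mp (.thm (iGLH.four χ)) hb
    have h1 : Deriv {conj ((χ :: L).map Formula.box)}
        (((χ.box).and (conj (L.flatMap fun χ => [χ, χ.box]))).box) :=
      .mp (.mp (.thm (iGLH.boxAnd _ _)) hbb) hr
    have h2 : Deriv {conj ((χ :: L).map Formula.box)}
        ((χ.and ((χ.box).and (conj (L.flatMap fun χ => [χ, χ.box])))).box) :=
      .mp (.mp (.thm (iGLH.boxAnd _ _)) hb) h1
    simpa [conj, List.flatMap] using h2
/- ### Subformulas -/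

def Formula.subf : Formula → Finset Formula
  | .var p => {.var p}
  | .bot => {.bot}
  | .imp a b => insert (a.imp b) (a.subf ∪ b.subf)
  | .and a b => insert (a.and b) (a.subf ∪ b.subf)
  | .or a b => insert (a.or b) (a.subf ∪ b.subf)
  | .box a => insert a.box a.subf

theorem Formula.mem_subf_self (φ : Formula) : φ ∈ φ.subf := by
  cases φ <;> simp [Formula.subf]

/-- A subformula-closed finite set. -/
structure SubClosed (Φ : Finset Formula) : Prop where
  imp : ∀ a b : Formula, a.imp b ∈ Φ → a ∈ Φ ∧ b ∈ Φ
  and : ∀ a b : Formula, a.and b ∈ Φ → a ∈ Φ ∧ b ∈ Φ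
  or : ∀ a b : Formula, a.or b ∈ Φ → a ∈ Φ ∧ b ∈ Φ
  box : ∀ a : Formula, a.box ∈ Φ → a ∈ Φ

theorem Formula.subf_trans {ψ φ : Formula} (h : ψ ∈ φ.subf) : ψ.subf ⊆ φ.subf := by
  induction φ with
  | var p => simp [Formula.subf] at h; subst h; exact Finset.Subset.refl _
  | bot => simp [Formula.subf] at h; subst h; exact Finset.Subset.refl _
  | imp a b iha ihb =>
    rcases Finset.mem_insert.1 h with h | h
    · subst h; exact Finset.Subset.refl _
    · rcases Finset.mem_union.1 h with h | h
      · exact (iha h).trans (fun x hx => Finset.mem_insert_of_mem (Finset.mem_union_left _ hx))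
      · exact (ihb h).trans (fun x hx => Finset.mem_insert_of_mem (Finset.mem_union_right _ hx))
  | and a b iha ihb =>
    rcases Finset.mem_insert.1 h with h | h
    · subst h; exact Finset.Subset.refl _
    · rcases Finset.mem_union.1 h with h | h
      · exact (iha h).trans (fun x hx => Finset.mem_insert_of_mem (Finset.mem_union_left _ hx))
      · exact (ihb h).trans (fun x hx => Finset.mem_insert_of_mem (Finset.mem_union_right _ hx))
  | or a b iha ihb =>
    rcases Finset.mem_insert.1 h with h | h
    · subst h; exact Finset.Subset.refl _
    · rcases Finset.mem_union.1 h with h | h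
      · exact (iha h).trans (fun x hx => Finset.mem_insert_of_mem (Finset.mem_union_left _ hx))
      · exact (ihb h).trans (fun x hx => Finset.mem_insert_of_mem (Finset.mem_union_right _ hx))
  | box a iha =>
    rcases Finset.mem_insert.1 h with h | h
    · subst h; exact Finset.Subset.refl _
    · exact (iha h).trans (fun x hx => Finset.mem_insert_of_mem hx)

theorem subf_subClosed (φ : Formula) : SubClosed φ.subf := by
  constructor
  · intro a b h
    have := Formula.subf_trans h
    constructor
    · exact this (by simp [Formula.subf, Formula.mem_subf_self])
    · exact this (by simp [Formula.subf, Formula.mem_subf_self])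
  · intro a b h
    have := Formula.subf_trans h
    constructor
    · exact this (by simp [Formula.subf, Formula.mem_subf_self])
    · exact this (by simp [Formula.subf, Formula.mem_subf_self])
  · intro a b h
    have := Formula.subf_trans h
    constructor
    · exact this (by simp [Formula.subf, Formula.mem_subf_self])
    · exact this (by simp [Formula.subf, Formula.mem_subf_self])
  · intro a h
    exact Formula.subf_trans h (by simp [Formula.subf, Formula.mem_subf_self])

/- ### Prime theories and the Lindenbaum lemma -/

/-- A good (prime) theory relative to the adequate set `Φ`, avoiding `θ`. -/
structure IsPrime (Φ : Finset Formula) (Δ : Finset Formula) : Prop where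
  sub : Δ ⊆ Φ
  closed : ∀ χ ∈ Φ, Deriv (↑Δ) χ → χ ∈ Δ
  con : ¬ Deriv (↑Δ : Set Formula) Formula.bot
  prime : ∀ a b : Formula, a.or b ∈ Δ → a ∈ Δ ∨ b ∈ Δ

open Classical in
theorem lindenbaum {Φ Γ : Finset Formula} (hΦ : SubClosed Φ) (hΓ : Γ ⊆ Φ)
    {θ : Formula} (hcon : ¬ Deriv (↑Γ : Set Formula) θ) :
    ∃ Δ : Finset Formula, Γ ⊆ Δ ∧ ¬ Deriv (↑Δ : Set Formula) θ ∧ IsPrime Φ Δ := by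
  classical
  let S : Finset (Finset Formula) :=
    Φ.powerset.filter (fun Δ => Γ ⊆ Δ ∧ ¬ Deriv (↑Δ : Set Formula) θ)
  have hΓS : Γ ∈ S := by
    simp only [S, Finset.mem_filter, Finset.mem_powerset]
    exact ⟨hΓ, Finset.Subset.refl _, hcon⟩
  obtain ⟨Δ, hΔS, hmax⟩ := S.exists_max_image Finset.card ⟨Γ, hΓS⟩
  simp only [S, Finset.mem_filter, Finset.mem_powerset] at hΔS
  obtain ⟨hΔΦ, hΓΔ, hΔcon⟩ := hΔS
  -- maximality: adding any new element of Φ makes θ derivable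
  have key : ∀ x ∈ Φ, x ∉ Δ → Deriv (insert x (↑Δ : Set Formula)) θ := by
    intro x hxΦ hxΔ
    by_contra hnd
    have hmem : insert x Δ ∈ S := by
      simp only [S, Finset.mem_filter, Finset.mem_powerset]
      refine ⟨Finset.insert_subset hxΦ hΔΦ, hΓΔ.trans (Finset.subset_insert _ _), ?_⟩
      simpa [Finset.coe_insert] using hnd
    have := hmax _ hmem
    have hc : Δ.card < (insert x Δ).card := by
      rw [Finset.card_insert_of_notMem hxΔ]; omega
    omega
  have hclosed : ∀ χ ∈ Φ, Deriv (↑Δ : Set Formula) χ → χ ∈ Δ := by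
    intro χ hχΦ hd
    by_contra hχΔ
    have h1 : Deriv (↑Δ : Set Formula) (χ.imp θ) := (key χ hχΦ hχΔ).deduction
    exact hΔcon (h1.mp hd)
  refine ⟨Δ, hΓΔ, hΔcon, ⟨hΔΦ, hclosed, ?_, ?_⟩⟩
  · intro hbot
    exact hΔcon (Deriv.mp (.thm (.taut (IPC.efq θ))) hbot)
  · intro a b hab
    by_contra hn
    push_neg at hn
    obtain ⟨ha, hb⟩ := hn
    have haΦ := (hΦ.or a b (hΔΦ hab)).1
    have hbΦ := (hΦ.or a b (hΔΦ hab)).2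
    have h1 : Deriv (↑Δ : Set Formula) (a.imp θ) := (key a haΦ ha).deduction
    have h2 : Deriv (↑Δ : Set Formula) (b.imp θ) := (key b hbΦ hb).deduction
    exact hΔcon <| Deriv.mp (Deriv.mp (Deriv.mp (.thm (.taut (IPC.orE a b θ))) h1) h2)
      (.ax hab)
/- ### The canonical model -/

def PrimeW (Φ : Finset Formula) : Type := {Δ : Finset Formula // IsPrime Φ Δ}

def canR (Φ : Finset Formula) (w v : PrimeW Φ) : Prop :=
  (∀ χ : Formula, χ.box ∈ w.1 → χ ∈ v.1 ∧ χ.box ∈ v.1) ∧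
    ∃ χ : Formula, χ.box ∈ v.1 ∧ χ.box ∉ w.1

def canFrame (Φ : Finset Formula) (ne : Nonempty (PrimeW Φ)) : IKFrame where
  W := PrimeW Φ
  nonempty := ne
  le w v := w.1 ⊆ v.1
  R := canR Φ
  po :=
    { refl := fun w => Finset.Subset.refl _
      trans := fun a b c h1 h2 => h1.trans h2
      antisymm := fun a b h1 h2 => Subtype.ext (Finset.Subset.antisymm h1 h2) }
  le_comp_R := by
    rintro x y z hxy ⟨h1, χ, h2, h3⟩
    exact ⟨fun χ' hχ' => h1 χ' (hxy hχ'), χ, h2, fun hc => h3 (hxy hc)⟩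

def canV (Φ : Finset Formula) (ne : Nonempty (PrimeW Φ)) :
    ℕ → (canFrame Φ ne).W → Prop :=
  fun p Δ => Formula.var p ∈ Δ.1

theorem canV_mono (Φ : Finset Formula) (ne : Nonempty (PrimeW Φ)) :
    MonotoneVal (canFrame Φ ne) (canV Φ ne) :=
  fun _ _ _ hle h => hle h

theorem canFrame_trans (Φ : Finset Formula) (ne : Nonempty (PrimeW Φ)) :
    (canFrame Φ ne).Transitive := by
  rintro x y z ⟨h1, χ₀, hχ₀v, hχ₀w⟩ ⟨h3, χ, h4, _⟩
  exact ⟨fun χ' hχ' => h3 χ' (h1 χ' hχ').2, χ₀, (h3 χ₀ hχ₀v).2, hχ₀w⟩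

theorem canFrame_brilliant (Φ : Finset Formula) (ne : Nonempty (PrimeW Φ)) :
    (canFrame Φ ne).Brilliant := by
  rintro x y z ⟨h1, χ, h2, h3⟩ hle
  exact ⟨fun χ' hχ' => ⟨hle (h1 χ' hχ').1, hle (h1 χ' hχ').2⟩, χ, hle h2, h3⟩

theorem canFrame_cwf (Φ : Finset Formula) (ne : Nonempty (PrimeW Φ)) :
    (canFrame Φ ne).ConverseWellFounded := by
  classical
  rintro ⟨f, hf⟩
  set g : ℕ → Finset Formula := fun n => (f n).1.filter (fun χ => ∃ a, χ = Formula.box a)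
    with hg
  have hstep : ∀ n, g n ⊂ g (n + 1) := by
    intro n
    obtain ⟨h1, χ, h2, h3⟩ := hf n
    constructor
    · intro x hx
      simp only [g, Finset.mem_filter] at hx ⊢
      obtain ⟨hx1, a, rfl⟩ := hx
      exact ⟨(h1 a hx1).2, a, rfl⟩
    · intro hsub
      have : Formula.box χ ∈ g (n + 1) := by
        simp only [g, Finset.mem_filter]; exact ⟨h2, χ, rfl⟩
      have := hsub this
      simp only [g, Finset.mem_filter] at this
      exact h3 this.1
  have hcard : ∀ n, n ≤ (g n).card := by
    intro n
    induction n with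
    | zero => omega
    | succ n ih =>
      have := Finset.card_lt_card (hstep n)
      omega
  have hbound : ∀ n, (g n).card ≤ Φ.card := by
    intro n
    apply Finset.card_le_card
    intro x hx
    simp only [g, Finset.mem_filter] at hx
    exact (f n).2.sub hx.1
  have h1 := hcard (Φ.card + 1)
  have h2 := hbound (Φ.card + 1)
  omega

/- ### The Truth Lemma -/

theorem truth_lemma (Φ : Finset Formula) (hΦ : SubClosed Φ) (ne : Nonempty (PrimeW Φ)) :
    ∀ {ψ : Formula}, ψ ∈ Φ → ∀ w : PrimeW Φ,
      Sat (canFrame Φ ne) (canV Φ ne) w ψ ↔ ψ ∈ w.1 := by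
  intro ψ
  induction ψ with
  | var p => intro _ w; exact Iff.rfl
  | bot =>
    intro _ w
    simp only [Sat]
    exact ⟨fun h => h.elim, fun h => w.2.con (.ax h)⟩
  | and a b iha ihb =>
    intro hm w
    obtain ⟨haΦ, hbΦ⟩ := hΦ.and a b hm
    simp only [Sat, iha haΦ w, ihb hbΦ w]
    constructor
    · rintro ⟨h1, h2⟩
      exact w.2.closed _ hm (.mp (.mp (.thm (.taut (IPC.andI a b))) (.ax h1)) (.ax h2))
    · intro h
      exact ⟨w.2.closed _ haΦ (.mp (.thm (.taut (IPC.andE1 a b))) (.ax h)),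
        w.2.closed _ hbΦ (.mp (.thm (.taut (IPC.andE2 a b))) (.ax h))⟩
  | or a b iha ihb =>
    intro hm w
    obtain ⟨haΦ, hbΦ⟩ := hΦ.or a b hm
    simp only [Sat, iha haΦ w, ihb hbΦ w]
    constructor
    · rintro (h | h)
      · exact w.2.closed _ hm (.mp (.thm (.taut (IPC.orI1 a b))) (.ax h))
      · exact w.2.closed _ hm (.mp (.thm (.taut (IPC.orI2 a b))) (.ax h))
    · intro h
      exact w.2.prime a b h
  | imp a b iha ihb =>
    intro hm w
    obtain ⟨haΦ, hbΦ⟩ := hΦ.imp a b hm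
    constructor
    · intro hsat
      by_contra hmem
      have hnd : ¬ Deriv (↑(insert a w.1) : Set Formula) b := by
        intro hd
        rw [Finset.coe_insert] at hd
        exact hmem (w.2.closed _ hm hd.deduction)
      obtain ⟨Δ, hsub, hndΔ, hprime⟩ :=
        lindenbaum hΦ (Finset.insert_subset haΦ w.2.sub) hnd
      have hle : w.1 ⊆ Δ := (Finset.subset_insert _ _).trans hsub
      have haΔ : a ∈ Δ := hsub (Finset.mem_insert_self _ _)
      have hbΔ : b ∉ Δ := fun h => hndΔ (.ax h)
      have := hsat ⟨Δ, hprime⟩ hle ((iha haΦ ⟨Δ, hprime⟩).2 haΔ)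
      exact hbΔ ((ihb hbΦ ⟨Δ, hprime⟩).1 this)
    · intro hmem v hle hsa
      have haΔ : a ∈ v.1 := (iha haΦ v).1 hsa
      refine (ihb hbΦ v).2 (v.2.closed _ hbΦ ?_)
      exact .mp (.ax (hle hmem)) (.ax haΔ)
  | box a iha =>
    intro hm w
    have haΦ : a ∈ Φ := hΦ.box a hm
    constructor
    · intro hsat
      by_contra hmem
      classical
      set L : List Formula := (Φ.filter (fun χ => χ.box ∈ w.1)).toList with hL
      have hLmem : ∀ χ : Formula, χ ∈ L ↔ χ ∈ Φ ∧ χ.box ∈ w.1 := by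
        intro χ
        simp [L, Finset.mem_toList, Finset.mem_filter]
      set H : List Formula := L.flatMap (fun χ => [χ, χ.box]) with hH
      have hHmem : ∀ x : Formula, x ∈ H ↔ ∃ χ ∈ L, x = χ ∨ x = χ.box := by
        intro x
        simp only [H, List.mem_flatMap, List.mem_cons, List.mem_singleton]
        constructor
        · rintro ⟨χ, hχ, h | h | h⟩
          · exact ⟨χ, hχ, Or.inl h⟩
          · exact ⟨χ, hχ, Or.inr h⟩
          · cases h
        · rintro ⟨χ, hχ, h | h⟩
          · exact ⟨χ, hχ, Or.inl h⟩
          · exact ⟨χ, hχ, Or.inr (Or.inl h)⟩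
      -- the context Γ = {□a} ∪ H is not sufficient to derive a
      have hnd : ¬ Deriv (↑(insert (Formula.box a) H.toFinset) : Set Formula) a := by
        intro hd
        rw [Finset.coe_insert, List.coe_toFinset] at hd
        have h1 : Deriv {x | x ∈ H} ((Formula.box a).imp a) := hd.deduction
        have h2 : iGLH ((conj H).imp ((Formula.box a).imp a)) := h1.conj_imp
        have h3 : iGLH (((conj H).box).imp (Formula.box a)) :=
          (iGLH.box_mono h2).imp_trans (iGLH.lob a)
        have h4 : iGLH ((conj (L.map Formula.box)).imp (Formula.box a)) :=
          (iGLH.collectBoxes L).imp_trans h3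
        have h5 : Deriv (↑w.1 : Set Formula) (conj (L.map Formula.box)) := by
          apply Deriv.conj_of
          intro x hx
          obtain ⟨χ, hχ, rfl⟩ := List.mem_map.1 hx
          exact .ax ((hLmem χ).1 hχ).2
        exact hmem (w.2.closed _ hm (Deriv.mp (.thm h4) h5))
      have hsubΦ : insert (Formula.box a) H.toFinset ⊆ Φ := by
        intro x hx
        rcases Finset.mem_insert.1 hx with h | h
        · subst h; exact hm
        · obtain ⟨χ, hχ, h | h⟩ := (hHmem x).1 (List.mem_toFinset.1 h)
          · rw [h]; exact ((hLmem χ).1 hχ).1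
          · rw [h]; exact w.2.sub ((hLmem χ).1 hχ).2
      obtain ⟨Δ, hsub, hndΔ, hprime⟩ := lindenbaum hΦ hsubΦ hnd
      have haΔ : a ∉ Δ := fun h => hndΔ (.ax h)
      have hR : canR Φ w ⟨Δ, hprime⟩ := by
        constructor
        · intro χ hχ
          have hχΦ : χ ∈ Φ := hΦ.box χ (w.2.sub hχ)
          have hχL : χ ∈ L := (hLmem χ).2 ⟨hχΦ, hχ⟩
          constructor
          · exact hsub (Finset.mem_insert_of_mem (List.mem_toFinset.2
              ((hHmem χ).2 ⟨χ, hχL, Or.inl rfl⟩)))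
          · exact hsub (Finset.mem_insert_of_mem (List.mem_toFinset.2
              ((hHmem χ.box).2 ⟨χ, hχL, Or.inr rfl⟩)))
        · exact ⟨a, hsub (Finset.mem_insert_self _ _), hmem⟩
      exact haΔ ((iha haΦ ⟨Δ, hprime⟩).1 (hsat ⟨Δ, hprime⟩ hR))
    · intro hmem v hR
      exact (iha haΦ v).2 (hR.1 a hmem).1
/- ### Soundness -/

theorem Sat.mono {F : IKFrame} {V : ℕ → F.W → Prop} (hV : MonotoneVal F V) :
    ∀ {ψ : Formula} {w v : F.W}, F.le w v → Sat F V w ψ → Sat F V v ψ := by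
  intro ψ
  induction ψ with
  | var p => intro w v hle h; exact hV p w v hle h
  | bot => intro w v _ h; exact h.elim
  | and a b iha ihb =>
    intro w v hle h
    exact ⟨iha hle h.1, ihb hle h.2⟩
  | or a b iha ihb =>
    intro w v hle h
    rcases h with h | h
    · exact Or.inl (iha hle h)
    · exact Or.inr (ihb hle h)
  | imp a b iha ihb =>
    intro w v hle h u hvu hu
    exact h u (F.po.trans _ _ _ hle hvu) hu
  | box a iha =>
    intro w v hle h u hvu
    exact h u (F.le_comp_R hle hvu)

theorem ipc_sound {ψ : Formula} (h : IPC ψ) (F : IKFrame) (V : ℕ → F.W → Prop)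
    (hV : MonotoneVal F V) (w : F.W) : Sat F V w ψ := by
  have htrans : ∀ {a b c : F.W}, F.le a b → F.le b c → F.le a c :=
    fun h1 h2 => F.po.trans _ _ _ h1 h2
  have hrefl : ∀ a : F.W, F.le a a := F.po.refl
  induction h generalizing w with
  | a1 a b =>
    intro v _ ha u hvu _
    exact Sat.mono hV hvu ha
  | a2 a b c =>
    intro v _ h1 u hvu h2 x hux h3
    exact h1 x (htrans hvu hux) h3 x (hrefl x) (h2 x hux h3)
  | andI a b =>
    intro v _ ha u hvu hb
    exact ⟨Sat.mono hV hvu ha, hb⟩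
  | andE1 a b => intro v _ h; exact h.1
  | andE2 a b => intro v _ h; exact h.2
  | orI1 a b => intro v _ h; exact Or.inl h
  | orI2 a b => intro v _ h; exact Or.inr h
  | orE a b c =>
    intro v _ h1 u hvu h2 x hux h3
    rcases h3 with h3 | h3
    · exact h1 x (htrans hvu hux) h3
    · exact h2 x hux h3
  | efq a => intro v _ h; exact h.elim
  | mp h1 h2 ih1 ih2 =>
    exact ih1 w w (hrefl w) (ih2 w)

theorem cwf_wf {F : IKFrame} (h : F.ConverseWellFounded) :
    WellFounded (fun x y : F.W => F.R y x) := by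
  classical
  constructor
  intro a
  by_contra ha
  have step : ∀ x : F.W, ¬ Acc (fun x y : F.W => F.R y x) x →
      ∃ y, F.R x y ∧ ¬ Acc (fun x y : F.W => F.R y x) y := by
    intro x hx
    by_contra hy
    push_neg at hy
    exact hx (Acc.intro x fun y hxy => hy y hxy)
  let g : {x : F.W // ¬ Acc (fun x y : F.W => F.R y x) x} →
      {x : F.W // ¬ Acc (fun x y : F.W => F.R y x) x} := fun p =>
    ⟨(step p.1 p.2).choose, (step p.1 p.2).choose_spec.2⟩
  have hg : ∀ p, F.R p.1 (g p).1 := fun p => (step p.1 p.2).choose_spec.1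
  refine h ⟨fun n => (g^[n] ⟨a, ha⟩).1, fun n => ?_⟩
  show F.R (g^[n] ⟨a, ha⟩).1 (g^[n + 1] ⟨a, ha⟩).1
  rw [Function.iterate_succ_apply']
  exact hg _

theorem iGLH_sound {ψ : Formula} (h : iGLH ψ) (F : IKFrame)
    (ht : F.Transitive) (hc : F.ConverseWellFounded) : ValidOn F ψ := by
  intro V hV w
  have htrans : ∀ {a b c : F.W}, F.le a b → F.le b c → F.le a c :=
    fun h1 h2 => F.po.trans _ _ _ h1 h2
  have hrefl : ∀ a : F.W, F.le a a := F.po.refl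
  induction h generalizing w with
  | taut h => exact ipc_sound h F V hV w
  | k a b =>
    intro v _ h1 u hvu h2 x hux
    exact h1 x (F.le_comp_R hvu hux) x (hrefl x) (h2 x hux)
  | lob a =>
    intro v _ h1
    have key : ∀ u : F.W, F.R v u → Sat F V u a := by
      intro u
      induction u using (cwf_wf hc).induction with
      | _ u ih =>
        intro hvu
        refine h1 u hvu u (hrefl u) ?_
        intro x hux
        exact ih x hux (ht hvu hux)
    exact key
  | mp h1 h2 ih1 ih2 =>
    exact ih1 w w (hrefl w) (ih2 w)
  | nec h ih =>
    intro v _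
    exact ih v

/- ### Main theorem -/

theorem iGL_sound_complete (φ : Formula) :
    iGLH φ ↔ ∀ F : IKFrame, F.Transitive → F.ConverseWellFounded → F.Brilliant →
      ValidOn F φ := by
  constructor
  · intro h F ht hc _
    exact iGLH_sound h F ht hc
  · intro hval
    by_contra hn
    have hΦ : SubClosed φ.subf := subf_subClosed φ
    have hnd : ¬ Deriv (↑(∅ : Finset Formula) : Set Formula) φ := by
      intro hd
      rw [Finset.coe_empty] at hd
      exact hn hd.toIGLH
    obtain ⟨Δ, _, hndΔ, hprime⟩ := lindenbaum hΦ (Finset.empty_subset _) hnd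
    have ne : Nonempty (PrimeW φ.subf) := ⟨⟨Δ, hprime⟩⟩
    have hmem : φ ∉ Δ := fun h => hndΔ (.ax h)
    have hsat := hval (canFrame φ.subf ne) (canFrame_trans _ _) (canFrame_cwf _ _)
      (canFrame_brilliant _ _) (canV φ.subf ne) (canV_mono _ _) ⟨Δ, hprime⟩
    exact hmem ((truth_lemma φ.subf hΦ ne (Formula.mem_subf_self φ) ⟨Δ, hprime⟩).1 hsat)
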